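/- arXiv:1203.2986 — 3 statements merged into one kernel-verified Lean document; each statement's English description precedes it below -/
import Mathlib

section
/- The unique radially symmetric solution ū_ε of the Dirichlet problem satisfies, for all 0 < r < 1: ln r < ū_ε(r) < 0, 0 < ū_ε'(r) < 1/r, and ū_ε'(r) < r/(2ε²). -/
open Real Set Metric Filter

/-- The Euclidean Laplacian of `u : ℝ² → ℝ`. -/
noncomputable def laplacian2 (u : EuclideanSpace ℝ (Fin 2) → ℝ)
    (x : EuclideanSpace ℝ (Fin 2)) : ℝ :=
  ∑ i : Fin 2,
    fderiv ℝ (fun y => fderiv ℝ u y (EuclideanSpace.single i 1)) x (EuclideanSpace.single i 1)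

/-- `u` is a solution of the Dirichlet problem
`Δu = ε⁻²·(exp u − |x|²·exp (−u))` in `B₁(0)`, `u = 0` on `∂B₁(0)`. -/
def IsDirichletSol (ε : ℝ) (u : EuclideanSpace ℝ (Fin 2) → ℝ) : Prop :=
  ContinuousOn u (closedBall 0 1) ∧
  ContDiffOn ℝ (⊤ : ℕ∞) u (ball 0 1) ∧
  (∀ x ∈ ball (0 : EuclideanSpace ℝ (Fin 2)) 1,
    laplacian2 u x = (ε ^ 2)⁻¹ * (Real.exp (u x) - ‖x‖ ^ 2 * Real.exp (-u x))) ∧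
  (∀ x ∈ sphere (0 : EuclideanSpace ℝ (Fin 2)) 1, u x = 0)


noncomputable abbrev E2 : Type := EuclideanSpace ℝ (Fin 2)
noncomputable def ee (i : Fin 2) : E2 := EuclideanSpace.single i 1

lemma norm_smul_ee (t : ℝ) (i : Fin 2) : ‖t • ee i‖ = |t| := by
  rw [norm_smul, ee, EuclideanSpace.norm_single]
  simp

lemma smul_ee_apply (t : ℝ) (i j : Fin 2) : (t • ee i) j = if i = j then t else 0 := by
  rw [ee]
  rcases eq_or_ne i j with h | h
  · simp [EuclideanSpace.single_apply, h, PiLp.smul_apply]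
  · simp [EuclideanSpace.single_apply, h, Ne.symm h, PiLp.smul_apply]

lemma norm_combo (r t : ℝ) : ‖r • ee 0 + t • ee 1‖ = Real.sqrt (r^2 + t^2) := by
  rw [EuclideanSpace.norm_eq]
  congr 1
  rw [Fin.sum_univ_two]
  have h0 : (r • ee 0 + t • ee 1) 0 = r := by
    rw [PiLp.add_apply, smul_ee_apply, smul_ee_apply]; norm_num
  have h1 : (r • ee 0 + t • ee 1) 1 = t := by
    rw [PiLp.add_apply, smul_ee_apply, smul_ee_apply]; norm_num
  rw [h0, h1]
  simp [sq_abs]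

lemma hasDerivAt_line (u : E2 → ℝ) {x v : E2} {t : ℝ}
    (hd : DifferentiableAt ℝ u (x + t • v)) :
    HasDerivAt (fun s : ℝ => u (x + s • v)) (fderiv ℝ u (x + t • v) v) t := by
  have hline : HasDerivAt (fun s : ℝ => x + s • v) v t := by
    simpa using ((hasDerivAt_id t).smul_const v).const_add x
  exact hd.hasFDerivAt.comp_hasDerivAt t hline

lemma profile_second (u : E2 → ℝ) (hu2 : ContDiffOn ℝ (⊤ : ℕ∞) u (ball 0 1))
    {x : E2} (hx : x ∈ ball 0 1) (v : E2) :
    fderiv ℝ (fun y => fderiv ℝ u y v) x v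
      = deriv (deriv (fun t : ℝ => u (x + t • v))) 0 := by
  have hdf : ContDiffOn ℝ (⊤ : ℕ∞) (fderiv ℝ u) (ball 0 1) :=
    hu2.fderiv_of_isOpen isOpen_ball (by simp)
  have hdiff : ∀ y ∈ ball (0:E2) 1, DifferentiableAt ℝ u y := fun y hy =>
    (hu2.contDiffAt (isOpen_ball.mem_nhds hy)).differentiableAt (by simp)
  have hTopen : IsOpen {t : ℝ | x + t • v ∈ ball (0:E2) 1} := by
    have : Continuous fun t : ℝ => x + t • v := by continuity
    exact isOpen_ball.preimage this
  have hT0 : (0:ℝ) ∈ {t : ℝ | x + t • v ∈ ball (0:E2) 1} := by simpa using hx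
  have hev : deriv (fun s : ℝ => u (x + s • v))
      =ᶠ[nhds (0:ℝ)] fun t => fderiv ℝ u (x + t • v) v := by
    filter_upwards [hTopen.mem_nhds hT0] with t ht
    exact (hasDerivAt_line u (hdiff _ ht)).deriv
  rw [hev.deriv_eq]
  have happ : DifferentiableAt ℝ (fderiv ℝ u) x :=
    (hdf.contDiffAt (isOpen_ball.mem_nhds hx)).differentiableAt (by simp)
  have hline0 : HasDerivAt (fun s : ℝ => x + s • v) v 0 := by
    simpa using ((hasDerivAt_id (0:ℝ)).smul_const v).const_add x
  have h2 : HasDerivAt (fun t : ℝ => fderiv ℝ u (x + t • v))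
      (fderiv ℝ (fderiv ℝ u) x v) 0 := by
    have hx0 : HasFDerivAt (fderiv ℝ u) (fderiv ℝ (fderiv ℝ u) x) (x + (0:ℝ) • v) := by
      simpa using happ.hasFDerivAt
    exact hx0.comp_hasDerivAt 0 hline0
  have h3 : HasDerivAt (fun t : ℝ => fderiv ℝ u (x + t • v) v)
      (fderiv ℝ (fderiv ℝ u) x v v) 0 := by
    simpa using h2.clm_apply (hasDerivAt_const 0 v)
  rw [h3.deriv]
  have hc : HasFDerivAt (fun y => fderiv ℝ u y v)
      ((ContinuousLinearMap.apply ℝ ℝ v).comp (fderiv ℝ (fderiv ℝ u) x)) x :=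
    ((ContinuousLinearMap.apply ℝ ℝ v).hasFDerivAt).comp x happ.hasFDerivAt
  rw [hc.fderiv]
  rfl

lemma deriv2_sqrt_profile {G : ℝ → ℝ} {r : ℝ} (hr : 0 < r)
    (h1 : ∀ᶠ s in nhds r, HasDerivAt G (deriv G s) s)
    (h2 : DifferentiableAt ℝ (deriv G) r) :
    deriv (deriv (fun t : ℝ => G (Real.sqrt (r^2 + t^2)))) 0 = deriv G r / r := by
  set n : ℝ → ℝ := fun t => Real.sqrt (r^2 + t^2) with hn
  have hn0 : n 0 = r := by simp [hn, Real.sqrt_sq hr.le]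
  have hnposin : ∀ t : ℝ, 0 < r^2 + t^2 := fun t => by positivity
  have hntpos : ∀ t, 0 < n t := fun t => Real.sqrt_pos.mpr (hnposin t)
  have hnd : ∀ t, HasDerivAt n (t / n t) t := by
    intro t
    have hin : HasDerivAt (fun t : ℝ => r^2 + t^2) (2*t) t := by
      simpa using ((hasDerivAt_pow 2 t).const_add (r^2))
    have := (Real.hasDerivAt_sqrt (ne_of_gt (hnposin t))).comp t hin
    refine this.congr_deriv ?_
    rw [hn]
    field_simp
  have hnc : Tendsto n (nhds 0) (nhds r) := by
    rw [← hn0]; exact (hnd 0).continuousAt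
  have hev1 : ∀ᶠ t in nhds (0:ℝ), HasDerivAt G (deriv G (n t)) (n t) := hnc.eventually h1
  have hevF : deriv (fun t => G (n t)) =ᶠ[nhds (0:ℝ)]
      fun t => (deriv G (n t) * (n t)⁻¹) * t := by
    filter_upwards [hev1] with t ht
    have hcomp : HasDerivAt (fun t => G (n t)) (deriv G (n t) * (t / n t)) t :=
      ht.comp t (hnd t)
    rw [hcomp.deriv, div_eq_mul_inv]
    ring
  rw [hevF.deriv_eq]
  have hGD : HasDerivAt (deriv G) (deriv (deriv G) r) r := h2.hasDerivAt
  have hGD0 : HasDerivAt (deriv G) (deriv (deriv G) r) (n 0) := by rwa [hn0]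
  have hB : HasDerivAt (fun t => deriv G (n t)) (deriv (deriv G) r * (0 / n 0)) 0 :=
    hGD0.comp 0 (hnd 0)
  have hC : HasDerivAt (fun t => (n t)⁻¹) (-(0 / n 0) / (n 0)^2) 0 :=
    (hnd 0).inv (hntpos 0).ne'
  have hfin : HasDerivAt (fun t => (deriv G (n t) * (n t)⁻¹) * t)
      ((deriv (deriv G) r * (0 / n 0) * (n 0)⁻¹ + deriv G (n 0) * (-(0 / n 0) / (n 0)^2)) * 0
        + (deriv G (n 0) * (n 0)⁻¹) * 1) 0 := (hB.mul hC).mul (hasDerivAt_id 0)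
  rw [hfin.deriv, hn0]
  field_simp
  ring

lemma second_nonpos_of_localmax {f f' : ℝ → ℝ} {f'' a : ℝ}
    (h1 : ∀ᶠ x in nhds a, HasDerivAt f (f' x) x)
    (h2 : HasDerivAt f' f'' a) (hmax : IsLocalMax f a) : f'' ≤ 0 := by
  by_contra hpos
  push_neg at hpos
  have hf'a : f' a = 0 := hmax.hasDerivAt_eq_zero h1.self_of_nhds
  have hslope : Tendsto (slope f' a) (nhdsWithin a {a}ᶜ) (nhds f'') :=
    hasDerivAt_iff_tendsto_slope.mp h2
  have hev : ∀ᶠ x in nhdsWithin a {a}ᶜ, 0 < slope f' a x :=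
    hslope.eventually (eventually_gt_nhds hpos)
  rw [eventually_nhdsWithin_iff] at hev
  obtain ⟨δ, hδpos, H⟩ := Metric.eventually_nhds_iff.mp ((h1.and (show ∀ᶠ x in nhds a, f x ≤ f a from hmax)).and hev)
  set b := a + δ/2 with hb
  have hab : a < b := by simp [hb]; positivity
  have hmem : ∀ x ∈ Icc a b, dist x a < δ := by
    intro x hx
    rw [Real.dist_eq, abs_lt]
    have h1' := hx.1
    have h2' := hx.2
    rw [hb] at h2'
    constructor <;> linarith
  have hcont : ContinuousOn f (Icc a b) := fun x hx =>
    ((H (hmem x hx)).1.1.continuousAt).continuousWithinAt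
  obtain ⟨c, hc, hceq⟩ := exists_hasDerivAt_eq_slope f f' hab hcont
    (fun x hx => (H (hmem x (Ioo_subset_Icc_self hx))).1.1)
  have hca : c ≠ a := ne_of_gt hc.1
  have hsc : 0 < slope f' a c := (H (hmem c (Ioo_subset_Icc_self hc))).2 hca
  rw [slope_def_field, hf'a, sub_zero, div_pos_iff] at hsc
  have hfc : 0 < f' c := by
    rcases hsc with ⟨h, _⟩ | ⟨_, h⟩
    · exact h
    · linarith [hc.1]
  rw [hceq] at hfc
  have hfb : f b ≤ f a := (H (hmem b (right_mem_Icc.mpr hab.le))).1.2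
  have hba : 0 < b - a := by linarith
  rcases div_pos_iff.mp hfc with ⟨h, _⟩ | ⟨_, h⟩ <;> linarith

lemma second_nonneg_of_localmin {f f' : ℝ → ℝ} {f'' a : ℝ}
    (h1 : ∀ᶠ x in nhds a, HasDerivAt f (f' x) x)
    (h2 : HasDerivAt f' f'' a) (hmin : IsLocalMin f a) : 0 ≤ f'' := by
  have := second_nonpos_of_localmax (f := -f) (f' := -f') (f'' := -f'') (a := a)
    (h1.mono fun x hx => hx.neg) h2.neg hmin.neg
  linarith

section OneD
variable {ε : ℝ} {G : ℝ → ℝ}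

lemma part_a (hε : 0 < ε)
    (hGC : ContinuousOn G (Icc (-1:ℝ) 1))
    (heven : ∀ t : ℝ, |t| ≤ 1 → G (-t) = G t)
    (hd1 : ∀ t ∈ Ioo (-1:ℝ) 1, HasDerivAt G (deriv G t) t)
    (hd2 : ∀ t ∈ Ioo (-1:ℝ) 1, HasDerivAt (deriv G) (deriv (deriv G) t) t)
    (hODE : ∀ r ∈ Ioo (0:ℝ) 1, deriv (deriv G) r + deriv G r / r
        = (ε^2)⁻¹ * (Real.exp (G r) - r^2 * Real.exp (-(G r))))
    (hG1 : G 1 = 0)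
    (hODE0 : 2 * deriv (deriv G) 0 = (ε^2)⁻¹ * Real.exp (G 0)) :
    ∀ r ∈ Ioo (0:ℝ) 1, G r < 0 := by
  have hIoo : Ioo (-1:ℝ) 1 ∈ nhds (0:ℝ) := isOpen_Ioo.mem_nhds (by norm_num)
  by_contra hcon
  push_neg at hcon
  obtain ⟨r₀, hr₀, hr₀ge⟩ := hcon
  have hsub : Icc (0:ℝ) 1 ⊆ Icc (-1:ℝ) 1 := Icc_subset_Icc (by norm_num) le_rfl
  obtain ⟨c, hc, hmax⟩ := (isCompact_Icc (a := (0:ℝ)) (b := 1)).exists_isMaxOn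
    (nonempty_Icc.mpr (by norm_num)) (hGC.mono hsub)
  -- replace by a point in Ico 0 1
  have key : ∃ d ∈ Ico (0:ℝ) 1, IsMaxOn G (Icc (0:ℝ) 1) d ∧ 0 ≤ G d := by
    rcases eq_or_ne c 1 with h1 | h1
    · refine ⟨r₀, ⟨hr₀.1.le, hr₀.2⟩, fun y hy => ?_, hr₀ge⟩
      have h3 := hmax (show y ∈ Icc (0:ℝ) 1 from hy)
      rw [h1, hG1] at h3
      simp only [mem_setOf_eq] at h3 ⊢
      linarith
    · exact ⟨c, ⟨hc.1, lt_of_le_of_ne hc.2 h1⟩, hmax,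
        le_trans hr₀ge (hmax (show r₀ ∈ Icc (0:ℝ) 1 from ⟨hr₀.1.le, hr₀.2.le⟩))⟩
  obtain ⟨d, hd, hdmax, hdge⟩ := key
  have hd2le : deriv (deriv G) d ≤ 0 := by
    have hloc : IsLocalMax G d := by
      rcases eq_or_lt_of_le hd.1 with h0 | h0
      · -- d = 0 : use evenness
        have : ∀ᶠ y in nhds d, G y ≤ G d := by
          filter_upwards [(by rw [← h0]; exact hIoo : Ioo (-1:ℝ) 1 ∈ nhds d)] with y hy
          rcases le_or_gt 0 y with hy0 | hy0
          · exact hdmax ⟨hy0, hy.2.le⟩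
          · have habs : |(-y)| ≤ 1 := by
              rw [abs_neg, abs_of_neg hy0]; linarith [hy.1]
            have hyy : G y = G (-y) := by
              have := heven (-y) habs
              rwa [neg_neg] at this
            rw [hyy]
            exact hdmax ⟨by linarith, by linarith [hy.1]⟩
        exact this
      · exact hdmax.isLocalMax (Icc_mem_nhds h0 hd.2)
    have hdIoo : d ∈ Ioo (-1:ℝ) 1 := ⟨by linarith [hd.1], hd.2⟩
    refine second_nonpos_of_localmax ?_ (hd2 d hdIoo) hloc
    filter_upwards [isOpen_Ioo.mem_nhds hdIoo] with y hy using hd1 y hy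
  rcases eq_or_lt_of_le hd.1 with h0 | h0
  · -- d = 0 : ODE0
    rw [← h0] at hd2le
    have : (0:ℝ) < (ε^2)⁻¹ * Real.exp (G 0) := by positivity
    linarith [hODE0]
  · -- d interior
    have hdIoo : d ∈ Ioo (0:ℝ) 1 := ⟨h0, hd.2⟩
    have hderiv0 : deriv G d = 0 := by
      have hloc : IsLocalMax G d := hdmax.isLocalMax (Icc_mem_nhds h0 hd.2)
      exact hloc.hasDerivAt_eq_zero (hd1 d ⟨by linarith, hd.2⟩)
    have := hODE d hdIoo
    rw [hderiv0] at this
    have hrhs : (0:ℝ) < (ε^2)⁻¹ * (Real.exp (G d) - d^2 * Real.exp (-(G d))) := by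
      have h1 : (1:ℝ) ≤ Real.exp (G d) := by
        rw [← Real.exp_zero]; exact Real.exp_le_exp.mpr hdge
      have h2 : Real.exp (-(G d)) ≤ 1 := by
        rw [← Real.exp_zero]; exact Real.exp_le_exp.mpr (by linarith)
      have hd2' : d^2 < 1 := by nlinarith [hdIoo.1, hdIoo.2]
      have : d^2 * Real.exp (-(G d)) < 1 := by nlinarith [Real.exp_pos (-(G d)), sq_nonneg d]
      have hpos : 0 < Real.exp (G d) - d^2 * Real.exp (-(G d)) := by linarith
      positivity
    simp only [zero_div, add_zero] at this
    linarith
end OneD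


lemma exp_sub_one_le' (x : ℝ) : Real.exp x - 1 ≤ x * Real.exp x := by
  have h1 := Real.add_one_le_exp (-x)
  have h2 := Real.exp_pos x
  have h3 : Real.exp (-x) * Real.exp x = 1 := by
    rw [← Real.exp_add]; simp
  nlinarith

lemma exp_sub_exp_neg_le (τ : ℝ) (h0 : 0 ≤ τ) (h1 : τ ≤ 1) :
    Real.exp τ - Real.exp (-τ) ≤ 16 * τ := by
  have e1 : Real.exp τ - Real.exp (-τ) = Real.exp (-τ) * (Real.exp (2*τ) - 1) := by
    rw [mul_sub, ← Real.exp_add]; ring_nf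
  have e2 : Real.exp (-τ) ≤ 1 := Real.exp_le_one_iff.mpr (by linarith)
  have e3 : Real.exp (2*τ) - 1 ≤ (2*τ) * Real.exp (2*τ) := exp_sub_one_le' _
  have e4 : Real.exp (2*τ) ≤ Real.exp 2 := Real.exp_le_exp.mpr (by linarith)
  have e5 : Real.exp 2 ≤ 8 := by
    have h := Real.exp_one_lt_d9
    have h2 : Real.exp 2 = Real.exp 1 * Real.exp 1 := by rw [← Real.exp_add]; norm_num
    nlinarith [Real.exp_pos 1]
  have e6 : 0 ≤ Real.exp (2*τ) - 1 := by
    have := Real.one_le_exp (by linarith : (0:ℝ) ≤ 2*τ)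
    linarith
  have e7 : 0 < Real.exp (-τ) := Real.exp_pos _
  nlinarith

section PB
variable {ε : ℝ} {G : ℝ → ℝ}

set_option maxHeartbeats 2000000 in
lemma part_b (hε : 0 < ε)
    (hGC : ContinuousOn G (Icc (-1:ℝ) 1))
    (hd1 : ∀ t ∈ Ioo (-1:ℝ) 1, HasDerivAt G (deriv G t) t)
    (hd2 : ∀ t ∈ Ioo (-1:ℝ) 1, HasDerivAt (deriv G) (deriv (deriv G) t) t)
    (hODE : ∀ r ∈ Ioo (0:ℝ) 1, deriv (deriv G) r + deriv G r / r
        = (ε^2)⁻¹ * (Real.exp (G r) - r^2 * Real.exp (-(G r))))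
    (hG1 : G 1 = 0) :
    ∀ r ∈ Ioo (0:ℝ) 1, Real.log r < G r := by
  have hsub : Icc (0:ℝ) 1 ⊆ Icc (-1:ℝ) 1 := Icc_subset_Icc (by norm_num) le_rfl
  obtain ⟨cm, hcm, hmin⟩ := (isCompact_Icc (a := (0:ℝ)) (b := 1)).exists_isMinOn
    (nonempty_Icc.mpr (by norm_num)) (hGC.mono hsub)
  set m := G cm with hm
  intro r hr
  set σ := min (r/2) (Real.exp (m-2)) with hσdef
  have hσpos : 0 < σ := lt_min (by linarith [hr.1]) (Real.exp_pos _)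
  have hσr : σ < r := lt_of_le_of_lt (min_le_left _ _) (by linarith [hr.1, hr.2])
  have hσ1 : σ < 1 := lt_trans hσr hr.2
  set A := (1 + 4/ε) / σ^2 with hAdef
  have hApos : 0 < A := by positivity
  have hAσ : A * σ^2 = 1 + 4/ε := by rw [hAdef]; field_simp
  have hA4 : 4/ε ≤ A := by
    rw [hAdef]
    rw [div_le_div_iff₀ (by positivity) (by positivity : (0:ℝ) < σ^2)]
    have he : (1+4/ε)*ε = ε + 4 := by field_simp
    nlinarith [hσpos, hσ1]
  set c := Real.exp (-A) with hcdef
  have hcpos : 0 < c := Real.exp_pos _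
  have hceA : c * Real.exp A = 1 := by
    rw [hcdef, ← Real.exp_add]; simp
  set φ : ℝ → ℝ := fun s => Real.exp (A*(1-s^2)) - 1 with hφdef
  set h : ℝ → ℝ := fun s => G s - Real.log s - c * φ s with hhdef
  -- derivative of φ
  have hφd : ∀ s : ℝ, HasDerivAt φ (Real.exp (A*(1-s^2)) * (A*(-(2*s)))) s := by
    intro s
    have hin : HasDerivAt (fun s : ℝ => A*(1-s^2)) (A*(-(2*s))) s := by
      have := ((hasDerivAt_pow 2 s).const_sub 1).const_mul A
      simpa using this
    exact (hin.exp).sub_const 1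
  set h' : ℝ → ℝ := fun s => deriv G s - s⁻¹ + 2*c*A*(s * Real.exp (A*(1-s^2)))
    with hh'def
  have hhd : ∀ s ∈ Ioo (0:ℝ) 1, HasDerivAt h (h' s) s := by
    intro s hs
    have h1 : HasDerivAt G (deriv G s) s := hd1 s ⟨by linarith [hs.1], hs.2⟩
    have h2 : HasDerivAt Real.log s⁻¹ s := Real.hasDerivAt_log hs.1.ne'
    have := (h1.sub h2).sub ((hφd s).const_mul c)
    refine this.congr_deriv ?_
    simp only [hh'def]
    ring
  -- the claim
  suffices hclaim : ∀ s ∈ Ioo σ 1, 0 < h s by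
    have := hclaim r ⟨hσr, hr.2⟩
    simp only [hhdef] at this
    have hφr : 0 ≤ φ r := by
      simp only [hφdef]
      have h1 : (0:ℝ) ≤ 1 - r^2 := by nlinarith [hr.1, hr.2]
      have := Real.one_le_exp (mul_nonneg hApos.le h1)
      linarith
    have h2 : 0 ≤ c * φ r := mul_nonneg hcpos.le hφr
    linarith
  -- prove claim by contradiction
  by_contra hcon
  push_neg at hcon
  obtain ⟨s₁, hs₁, hs₁le⟩ := hcon
  -- continuity of h on Icc σ 1
  have hhc : ContinuousOn h (Icc σ 1) := by
    have hsub2 : Icc σ 1 ⊆ Icc (-1:ℝ) 1 := Icc_subset_Icc (by linarith) le_rfl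
    refine ((hGC.mono hsub2).sub ?_).sub ?_
    · exact fun x hx => (Real.continuousAt_log (ne_of_gt (lt_of_lt_of_le hσpos hx.1))).continuousWithinAt
    · have hφc : Continuous φ := by
        rw [hφdef]
        exact (Real.continuous_exp.comp (continuous_const.mul
          (continuous_const.sub (continuous_pow 2)))).sub continuous_const
      exact (continuous_const.mul hφc).continuousOn
  obtain ⟨ρ₀, hρ₀, hρ₀min⟩ := (isCompact_Icc (a := σ) (b := 1)).exists_isMinOn
    (nonempty_Icc.mpr (by linarith)) hhc
  -- boundary values
  have hσval : 0 < h σ := by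
    have hGσ : m ≤ G σ := hmin ⟨hσpos.le, hσ1.le⟩
    have hlogσ : Real.log σ ≤ m - 2 := by
      calc Real.log σ ≤ Real.log (Real.exp (m-2)) :=
            Real.log_le_log hσpos (min_le_right _ _)
        _ = m - 2 := Real.log_exp _
    have hφσ : φ σ ≤ Real.exp A - 1 := by
      simp only [hφdef]
      have h1 : A*(1-σ^2) ≤ A := by nlinarith [hσpos, sq_nonneg σ]
      have := Real.exp_le_exp.mpr h1
      linarith
    have hφσ0 : 0 ≤ φ σ := by
      simp only [hφdef]
      have h1 : (0:ℝ) ≤ 1 - σ^2 := by nlinarith [hσpos, hσ1]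
      linarith [Real.one_le_exp (mul_nonneg hApos.le h1)]
    have hcφ : c * φ σ ≤ 1 - c := by
      have h1 : c * φ σ ≤ c * (Real.exp A - 1) := mul_le_mul_of_nonneg_left hφσ hcpos.le
      have h2 : c * (Real.exp A - 1) = 1 - c := by rw [mul_sub, hceA]; ring
      linarith
    simp only [hhdef]
    linarith
  have h1val : h 1 = 0 := by
    simp only [hhdef, hφdef, hG1]
    norm_num
  -- extract interior min point
  have key : ∃ ρ ∈ Ioo σ 1, IsMinOn h (Icc σ 1) ρ ∧ h ρ ≤ 0 := by
    have hρ₀le : h ρ₀ ≤ 0 := le_trans (hρ₀min ⟨hs₁.1.le, hs₁.2.le⟩) hs₁le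
    have hρ₀σ : ρ₀ ≠ σ := by
      intro hh; rw [hh] at hρ₀le; linarith
    rcases eq_or_ne ρ₀ 1 with h1 | h1
    · rw [h1, h1val] at hρ₀le
      -- min value is ≥ 0? h ρ₀ = 0 then; s₁ is a min point
      have hminval : ∀ y ∈ Icc σ 1, 0 ≤ h y := by
        intro y hy
        have := hρ₀min hy
        rw [h1, h1val] at this
        exact this
      have hs₁0 : h s₁ = 0 := le_antisymm hs₁le (hminval s₁ ⟨hs₁.1.le, hs₁.2.le⟩)
      exact ⟨s₁, hs₁, fun y hy => by rw [hs₁0]; exact hminval y hy, le_of_eq hs₁0⟩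
    · exact ⟨ρ₀, ⟨lt_of_le_of_ne hρ₀.1 (Ne.symm hρ₀σ), lt_of_le_of_ne hρ₀.2 h1⟩,
        hρ₀min, hρ₀le⟩
  obtain ⟨ρ, hρ, hρmin, hρle⟩ := key
  have hρ01 : ρ ∈ Ioo (0:ℝ) 1 := ⟨lt_trans hσpos hρ.1, hρ.2⟩
  have hloc : IsLocalMin h ρ := hρmin.isLocalMin (Icc_mem_nhds hρ.1 hρ.2)
  -- first derivative zero
  have hfd0 : h' ρ = 0 := hloc.hasDerivAt_eq_zero (hhd ρ hρ01)
  -- second derivative nonneg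
  set E := Real.exp (A*(1-ρ^2)) with hEdef
  have hEpos : 0 < E := Real.exp_pos _
  have hs2 : HasDerivAt h'
      (deriv (deriv G) ρ - (-(ρ^2)⁻¹) + 2*c*A*(1 * E + ρ * (E * (A*(-(2*ρ)))))) ρ := by
    have q1 : HasDerivAt (fun s => deriv G s) (deriv (deriv G) ρ) ρ :=
      hd2 ρ ⟨by linarith [hρ01.1], hρ01.2⟩
    have q2 : HasDerivAt (fun s : ℝ => s⁻¹) (-(ρ^2)⁻¹) ρ := hasDerivAt_inv hρ01.1.ne'
    have q3 : HasDerivAt (fun s : ℝ => s * Real.exp (A*(1-s^2)))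
        (1 * E + ρ * (E * (A*(-(2*ρ))))) ρ := by
      have := (hasDerivAt_id ρ).mul (hφd ρ |>.add_const 1)
      simp only [hφdef] at this
      refine (this.congr_of_eventuallyEq (Filter.Eventually.of_forall fun s => ?_)).congr_deriv ?_
      · simp
      · simp [hEdef]
    exact (q1.sub q2).add ((q3.const_mul (2*c*A)))
  have hsecond : 0 ≤ deriv (deriv G) ρ - (-(ρ^2)⁻¹) + 2*c*A*(1 * E + ρ * (E * (A*(-(2*ρ))))) := by
    refine second_nonneg_of_localmin ?_ hs2 hloc
    filter_upwards [isOpen_Ioo.mem_nhds hρ01] with y hy using hhd y hy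
  -- notation
  set D := deriv (deriv G) ρ with hD
  set L := deriv G ρ with hL
  set gg := G ρ with hgg
  have hODEρ : D + L / ρ = (ε^2)⁻¹ * (Real.exp gg - ρ^2 * Real.exp (-gg)) := hODE ρ hρ01
  set R := (ε^2)⁻¹ * (Real.exp gg - ρ^2 * Real.exp (-gg)) with hR
  -- from h' ρ = 0 : L = ρ⁻¹ - 2cAρE
  have hLval : L = ρ⁻¹ - 2*c*A*(ρ*E) := by
    have := hfd0
    simp only [hh'def, ← hEdef] at this
    linarith [this]
  -- lower bound on R
  have hρpos := hρ01.1
  have hRlower : 4*c*A*E*(A*ρ^2-1) ≤ R := by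
    have hLdiv : L / ρ = (ρ^2)⁻¹ - 2*c*A*E := by
      rw [hLval]
      field_simp
    have hDval : D = R - (ρ^2)⁻¹ + 2*c*A*E := by
      rw [← hODEρ, hLdiv]; ring
    have h9 : D + (ρ^2)⁻¹ + 2*c*A*(1 * E + ρ * (E * (A*(-(2*ρ))))) = R - 4*c*A*E*(A*ρ^2-1) := by
      rw [hDval]; ring
    have h10 : 0 ≤ deriv (deriv G) ρ - (-(ρ^2)⁻¹) + 2*c*A*(1 * E + ρ * (E * (A*(-(2*ρ))))) := hsecond
    have h11 : deriv (deriv G) ρ - (-(ρ^2)⁻¹) + 2*c*A*(1 * E + ρ * (E * (A*(-(2*ρ)))))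
        = D + (ρ^2)⁻¹ + 2*c*A*(1 * E + ρ * (E * (A*(-(2*ρ))))) := by rw [hD]; ring
    rw [h11, h9] at h10
    linarith
  have hAρ : 4/ε ≤ A*ρ^2 - 1 := by
    have hsρ : σ^2 ≤ ρ^2 := pow_le_pow_left₀ hσpos.le hρ.1.le 2
    have h1 : A * σ^2 ≤ A * ρ^2 := mul_le_mul_of_nonneg_left hsρ hApos.le
    rw [hAσ] at h1
    linarith
  have hR16 : 64 * c * E / ε^2 ≤ R := by
    have h4 : (4:ℝ)/ε ≤ A := hA4
    have hcE : 0 < c * E := by positivity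
    calc 64 * c * E / ε^2 = 4*c*E*(4/ε)*(4/ε) := by field_simp; ring
      _ ≤ 4*c*E*(A*(A*ρ^2-1)) := by
          have h1 : (0:ℝ) ≤ 4/ε := by positivity
          have h2 : (4/ε)*(4/ε) ≤ A*(A*ρ^2-1) :=
            mul_le_mul hA4 hAρ h1 (le_trans h1 hA4)
          have h3 : 4*c*E*((4/ε)*(4/ε)) ≤ 4*c*E*(A*(A*ρ^2-1)) :=
            mul_le_mul_of_nonneg_left h2 (by positivity)
          calc 4*c*E*(4/ε)*(4/ε) = 4*c*E*((4/ε)*(4/ε)) := by ring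
            _ ≤ 4*c*E*(A*(A*ρ^2-1)) := h3
      _ = 4*c*A*E*(A*ρ^2-1) := by ring
      _ ≤ R := hRlower
  -- upper bound on R
  set τ := c * φ ρ with hτ
  have hφρ0 : 0 ≤ φ ρ := by
    simp only [hφdef]
    have h1 : (0:ℝ) ≤ 1 - ρ^2 := by nlinarith [hρ01.1, hρ01.2]
    linarith [Real.one_le_exp (mul_nonneg hApos.le h1)]
  have hτ0 : 0 ≤ τ := by positivity
  have hτE : τ ≤ c * E := by
    have h1 : φ ρ ≤ E := by simp only [hφdef, hEdef]; linarith
    have := mul_le_mul_of_nonneg_left h1 hcpos.le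
    simpa [hτ] using this
  have hτ1 : τ ≤ 1 := by
    have hEA : E ≤ Real.exp A := by
      rw [hEdef]
      refine Real.exp_le_exp.mpr ?_
      have h1 : (0:ℝ) ≤ ρ^2 := sq_nonneg ρ
      nlinarith [hApos]
    have h2 : c * E ≤ c * Real.exp A := mul_le_mul_of_nonneg_left hEA hcpos.le
    rw [hceA] at h2
    linarith [hτE]
  have hgup : gg ≤ Real.log ρ + τ := by
    have := hρle
    simp only [hhdef] at this
    simp only [hτ, hgg]
    linarith
  have hexpg : Real.exp gg ≤ ρ * Real.exp τ := by
    have h1 : Real.exp gg ≤ Real.exp (Real.log ρ + τ) := Real.exp_le_exp.mpr hgup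
    rwa [Real.exp_add, Real.exp_log hρpos] at h1
  have hexpng : ρ⁻¹ * Real.exp (-τ) ≤ Real.exp (-gg) := by
    have h1 : Real.exp (-(Real.log ρ + τ)) ≤ Real.exp (-gg) :=
      Real.exp_le_exp.mpr (by linarith)
    calc ρ⁻¹ * Real.exp (-τ) = Real.exp (-(Real.log ρ + τ)) := by
          rw [neg_add, Real.exp_add, Real.exp_neg, Real.exp_neg, Real.exp_log hρpos]
      _ ≤ Real.exp (-gg) := h1
  have hRupper : R ≤ 16 * c * E / ε^2 := by
    have h1 : Real.exp gg - ρ^2 * Real.exp (-gg) ≤ ρ * (Real.exp τ - Real.exp (-τ)) := by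
      have h2 : ρ^2 * (ρ⁻¹ * Real.exp (-τ)) ≤ ρ^2 * Real.exp (-gg) :=
        mul_le_mul_of_nonneg_left hexpng (sq_nonneg ρ)
      have h3 : ρ^2 * (ρ⁻¹ * Real.exp (-τ)) = ρ * Real.exp (-τ) := by
        field_simp
      have h4 : ρ * (Real.exp τ - Real.exp (-τ)) = ρ * Real.exp τ - ρ * Real.exp (-τ) := by
        ring
      rw [h3] at h2
      linarith
    have h2 : Real.exp τ - Real.exp (-τ) ≤ 16 * τ := exp_sub_exp_neg_le τ hτ0 hτ1
    have h3 : ρ * (Real.exp τ - Real.exp (-τ)) ≤ 16 * τ := by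
      have hnn : 0 ≤ Real.exp τ - Real.exp (-τ) := by
        have := Real.exp_le_exp.mpr (by linarith : -τ ≤ τ)
        linarith
      have h5 : ρ * (Real.exp τ - Real.exp (-τ)) ≤ 1 * (Real.exp τ - Real.exp (-τ)) :=
        mul_le_mul_of_nonneg_right hρ01.2.le hnn
      linarith
    have h4 : Real.exp gg - ρ^2 * Real.exp (-gg) ≤ 16 * (c*E) := by
      calc Real.exp gg - ρ^2 * Real.exp (-gg) ≤ ρ * (Real.exp τ - Real.exp (-τ)) := h1
        _ ≤ 16 * τ := h3
        _ ≤ 16 * (c*E) := by linarith [hτE]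
    rw [hR]
    have hε2 : (0:ℝ) < (ε^2)⁻¹ := by positivity
    have h5 : (ε^2)⁻¹ * (Real.exp gg - ρ^2 * Real.exp (-gg)) ≤ (ε^2)⁻¹ * (16*(c*E)) :=
      mul_le_mul_of_nonneg_left h4 hε2.le
    have h6 : (ε^2)⁻¹ * (16*(c*E)) = 16*c*E/ε^2 := by field_simp
    linarith
  have hcE : 0 < c * E / ε^2 := by positivity
  have hfin : 64 * c * E / ε^2 ≤ 16 * c * E / ε^2 := le_trans hR16 hRupper
  have : 64 * c * E / ε^2 = 4 * (16 * c * E / ε^2) := by ring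
  rw [this] at hfin
  have h16 : 0 < 16 * c * E / ε^2 := by positivity
  linarith

end PB

section PC
variable {ε : ℝ} {G : ℝ → ℝ}

lemma part_c (hε : 0 < ε)
    (hGC : ContinuousOn G (Icc (-1:ℝ) 1))
    (hd1 : ∀ t ∈ Ioo (-1:ℝ) 1, HasDerivAt G (deriv G t) t)
    (hd2 : ∀ t ∈ Ioo (-1:ℝ) 1, HasDerivAt (deriv G) (deriv (deriv G) t) t)
    (hODE : ∀ r ∈ Ioo (0:ℝ) 1, deriv (deriv G) r + deriv G r / r
        = (ε^2)⁻¹ * (Real.exp (G r) - r^2 * Real.exp (-(G r))))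
    (hG1 : G 1 = 0)
    (hneg : ∀ r ∈ Ioo (0:ℝ) 1, G r < 0)
    (hlog : ∀ r ∈ Ioo (0:ℝ) 1, Real.log r < G r) :
    ∀ r ∈ Ioo (0:ℝ) 1, (0 < deriv G r ∧ deriv G r < 1/r) ∧ deriv G r < r/(2*ε^2) := by
  have hsub : Ico (0:ℝ) 1 ⊆ Ioo (-1:ℝ) 1 := fun x hx => ⟨by linarith [hx.1], hx.2⟩
  have hdc : ContinuousOn (deriv G) (Ico (0:ℝ) 1) := fun t ht =>
    ((hd2 t (hsub ht)).continuousAt).continuousWithinAt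
  have hRpos : ∀ s ∈ Ioo (0:ℝ) 1,
      0 < (ε^2)⁻¹ * (Real.exp (G s) - s^2 * Real.exp (-(G s))) := by
    intro s hs
    have h1 : s < Real.exp (G s) := by
      have := Real.exp_lt_exp.mpr (hlog s hs)
      rwa [Real.exp_log hs.1] at this
    have h2 : Real.exp (-(G s)) < s⁻¹ := by
      have h3 : Real.exp (-(G s)) < Real.exp (-Real.log s) :=
        Real.exp_lt_exp.mpr (by linarith [hlog s hs])
      have h4 : Real.exp (-Real.log s) = s⁻¹ := by
        rw [Real.exp_neg, Real.exp_log hs.1]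
      linarith
    have h4 : s^2 * Real.exp (-(G s)) < s^2 * s⁻¹ :=
      mul_lt_mul_of_pos_left h2 (pow_pos hs.1 2)
    have h5 : s^2 * s⁻¹ = s := by
      rw [sq, mul_assoc, mul_inv_cancel₀ hs.1.ne', mul_one]
    have hpos : 0 < Real.exp (G s) - s^2 * Real.exp (-(G s)) := by
      rw [h5] at h4; linarith
    exact mul_pos (inv_pos.mpr (pow_pos hε 2)) hpos
  have hRlt : ∀ s ∈ Ioo (0:ℝ) 1,
      (ε^2)⁻¹ * (Real.exp (G s) - s^2 * Real.exp (-(G s))) < (ε^2)⁻¹ := by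
    intro s hs
    have h1 : Real.exp (G s) < 1 := Real.exp_lt_one_iff.mpr (hneg s hs)
    have h2 : 0 < s^2 * Real.exp (-(G s)) := mul_pos (pow_pos hs.1 2) (Real.exp_pos _)
    have h3 : Real.exp (G s) - s^2 * Real.exp (-(G s)) < 1 := by linarith
    have hε2 : (0:ℝ) < (ε^2)⁻¹ := inv_pos.mpr (pow_pos hε 2)
    calc (ε^2)⁻¹ * (Real.exp (G s) - s^2 * Real.exp (-(G s))) < (ε^2)⁻¹ * 1 :=
          mul_lt_mul_of_pos_left h3 hε2
      _ = (ε^2)⁻¹ := mul_one _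
  -- derivative of s * deriv G s on (0,1)
  have hGGd : ∀ s ∈ Ioo (0:ℝ) 1, HasDerivAt (fun s => s * deriv G s)
      (s * ((ε^2)⁻¹ * (Real.exp (G s) - s^2 * Real.exp (-(G s))))) s := by
    intro s hs
    have h1 : HasDerivAt (fun s => s * deriv G s)
        (1 * deriv G s + s * deriv (deriv G) s) s :=
      (hasDerivAt_id s).mul (hd2 s ⟨by linarith [hs.1], hs.2⟩)
    have hs0 : s ≠ 0 := hs.1.ne'
    have h2 : 1 * deriv G s + s * deriv (deriv G) s
        = s * (deriv (deriv G) s + deriv G s / s) := by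
      field_simp
      ring
    rw [h2, hODE s hs] at h1
    exact h1
  -- GG := s * deriv G s is strictly monotone on Ico 0 1
  have hGGmono : StrictMonoOn (fun s => s * deriv G s) (Ico (0:ℝ) 1) := by
    refine strictMonoOn_of_deriv_pos (convex_Ico 0 1) (continuousOn_id.mul hdc) ?_
    intro s hs
    rw [interior_Ico] at hs
    rw [(hGGd s hs).deriv]
    exact mul_pos hs.1 (hRpos s hs)
  -- H := s^2/(2ε^2) - s * deriv G s strictly monotone on Ico 0 1
  have hHd : ∀ s ∈ Ioo (0:ℝ) 1, HasDerivAt (fun s => s^2/(2*ε^2) - s * deriv G s)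
      (s/ε^2 - s * ((ε^2)⁻¹ * (Real.exp (G s) - s^2 * Real.exp (-(G s))))) s := by
    intro s hs
    have h1 : HasDerivAt (fun s : ℝ => s^2/(2*ε^2)) ((2*s^1)/(2*ε^2)) s :=
      (hasDerivAt_pow 2 s).div_const _
    have h2 : (2*s^1)/(2*ε^2) = s/ε^2 := by
      field_simp
    rw [h2] at h1
    exact h1.sub (hGGd s hs)
  have hHmono : StrictMonoOn (fun s => s^2/(2*ε^2) - s * deriv G s) (Ico (0:ℝ) 1) := by
    refine strictMonoOn_of_deriv_pos (convex_Ico 0 1) ?_ ?_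
    · exact ((continuousOn_pow 2).div_const _).sub (continuousOn_id.mul hdc)
    · intro s hs
      rw [interior_Ico] at hs
      rw [(hHd s hs).deriv]
      have h1 := hRlt s hs
      have h2 : s * ((ε^2)⁻¹ * (Real.exp (G s) - s^2 * Real.exp (-(G s)))) < s * (ε^2)⁻¹ :=
        mul_lt_mul_of_pos_left h1 hs.1
      have h3 : s/ε^2 = s * (ε^2)⁻¹ := by field_simp
      linarith
  intro r hr
  have hr0 : (0:ℝ) ∈ Ico (0:ℝ) 1 := ⟨le_rfl, one_pos⟩
  have hrmem : r ∈ Ico (0:ℝ) 1 := ⟨hr.1.le, hr.2⟩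
  -- 0 < deriv G r
  have hpos : 0 < deriv G r := by
    have := hGGmono hr0 hrmem hr.1
    simp only [zero_mul] at this
    by_contra hle
    push_neg at hle
    nlinarith [hr.1]
  -- deriv G r < r/(2ε²)
  have hup2 : deriv G r < r/(2*ε^2) := by
    have := hHmono hr0 hrmem hr.1
    simp only [zero_mul] at this
    norm_num at this
    have h1 : r * deriv G r < r^2/(2*ε^2) := by linarith
    have h2 : r^2/(2*ε^2) = r * (r/(2*ε^2)) := by rw [sq]; ring
    rw [h2] at h1
    exact lt_of_mul_lt_mul_left h1 hr.1.le
  -- deriv G r < 1/r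
  have hup1 : deriv G r < 1/r := by
    by_contra hge
    push_neg at hge
    have hGG1 : 1 ≤ r * deriv G r := by
      have h1 : r * (1/r) ≤ r * deriv G r := mul_le_mul_of_nonneg_left hge hr.1.le
      rwa [mul_one_div, div_self hr.1.ne'] at h1
    set mid := (r+1)/2 with hmid
    have hmidIoo : mid ∈ Ioo r 1 := ⟨by rw [hmid]; linarith [hr.2], by rw [hmid]; linarith [hr.2]⟩
    have hmid01 : mid ∈ Ioo (0:ℝ) 1 := ⟨by rw [hmid]; linarith [hr.1], hmidIoo.2⟩
    -- h₀ := G - log strictly monotone on [r,1]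
    have hh0c : ContinuousOn (fun s => G s - Real.log s) (Icc r 1) := by
      refine (hGC.mono (Icc_subset_Icc (by linarith [hr.1]) le_rfl)).sub ?_
      exact fun x hx => (Real.continuousAt_log
        (ne_of_gt (lt_of_lt_of_le hr.1 hx.1))).continuousWithinAt
    have hh0mono : StrictMonoOn (fun s => G s - Real.log s) (Icc r 1) := by
      refine strictMonoOn_of_deriv_pos (convex_Icc r 1) hh0c ?_
      intro s hs
      rw [interior_Icc] at hs
      have hs01 : s ∈ Ioo (0:ℝ) 1 := ⟨lt_trans hr.1 hs.1, hs.2⟩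
      have hds : HasDerivAt (fun s => G s - Real.log s) (deriv G s - s⁻¹) s :=
        (hd1 s ⟨by linarith [hs01.1], hs01.2⟩).sub (Real.hasDerivAt_log hs01.1.ne')
      rw [hds.deriv]
      -- deriv G s > 1/s since s * deriv G s > 1
      have hGGs : 1 < s * deriv G s := by
        have h7 : r * deriv G r < s * deriv G s := hGGmono hrmem ⟨hs01.1.le, hs01.2⟩ hs.1
        linarith [hGG1]
      have hinv : s⁻¹ * 1 < s⁻¹ * (s * deriv G s) :=
        mul_lt_mul_of_pos_left hGGs (inv_pos.mpr hs01.1)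
      rw [mul_one, ← mul_assoc, inv_mul_cancel₀ hs01.1.ne', one_mul] at hinv
      linarith
    have hmidlt : G mid - Real.log mid < G 1 - Real.log 1 :=
      hh0mono ⟨hmidIoo.1.le, hmidIoo.2.le⟩ ⟨by linarith [hr.1, hr.2], le_rfl⟩ hmidIoo.2
    rw [hG1, Real.log_one] at hmidlt
    have := hlog mid hmid01
    linarith
  exact ⟨⟨hpos, hup1⟩, hup2⟩

end PC
/-- the unique radially symmetric solution `ū_ε` (with radial profile `g`)
satisfies, for all `0 < r < 1`: `ln r < ū_ε(r) < 0`, `0 < ū_ε'(r) < 1/r`, and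
`ū_ε'(r) < r/(2ε²)`. -/
theorem stmt_11 (ε : ℝ) (hε : 0 < ε)
    (u : EuclideanSpace ℝ (Fin 2) → ℝ) (g : ℝ → ℝ)
    (hu : IsDirichletSol ε u)
    (hrad : ∀ x ∈ closedBall (0 : EuclideanSpace ℝ (Fin 2)) 1, u x = g ‖x‖) :
    ∀ r ∈ Ioo (0 : ℝ) 1,
      (Real.log r < g r ∧ g r < 0) ∧
      (0 < deriv g r ∧ deriv g r < 1 / r) ∧
      deriv g r < r / (2 * ε ^ 2) := by
  obtain ⟨hucont, husm, hpde, hbdry⟩ := hu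
  set G : ℝ → ℝ := fun t => u (t • ee 0) with hGdef
  have hmemb : ∀ t : ℝ, |t| < 1 → t • ee 0 ∈ ball (0:E2) 1 := by
    intro t ht; rw [mem_ball_zero_iff, norm_smul_ee]; exact ht
  have hmemc : ∀ t : ℝ, |t| ≤ 1 → t • ee 0 ∈ closedBall (0:E2) 1 := by
    intro t ht; rw [mem_closedBall_zero_iff, norm_smul_ee]; exact ht
  have hGg : ∀ t : ℝ, |t| ≤ 1 → G t = g |t| := by
    intro t ht
    rw [hGdef]
    simp only
    rw [hrad _ (hmemc t ht), norm_smul_ee]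
  have hGg' : ∀ r ∈ Icc (0:ℝ) 1, G r = g r := by
    intro r hr
    rw [hGg r (abs_le.mpr ⟨by linarith [hr.1], hr.2⟩), abs_of_nonneg hr.1]
  have heven : ∀ t : ℝ, |t| ≤ 1 → G (-t) = G t := by
    intro t ht
    rw [hGg (-t) (by rwa [abs_neg]), hGg t ht, abs_neg]
  have hGC : ContinuousOn G (Icc (-1:ℝ) 1) := by
    refine hucont.comp ((continuous_id.smul continuous_const).continuousOn) ?_
    intro t ht
    exact hmemc t (abs_le.mpr ⟨ht.1, ht.2⟩)
  have hG1 : G 1 = 0 := by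
    apply hbdry
    rw [mem_sphere_zero_iff_norm, norm_smul_ee]
    norm_num
  have hGsm : ContDiffOn ℝ (⊤ : ℕ∞) G (Ioo (-1:ℝ) 1) := by
    intro t ht
    have hmem := hmemb t (abs_lt.mpr ht)
    have h1 : ContDiffAt ℝ (⊤ : ℕ∞) u (t • ee 0) := husm.contDiffAt (isOpen_ball.mem_nhds hmem)
    have h2 : ContDiffAt ℝ (⊤ : ℕ∞) (fun s : ℝ => s • ee 0) t :=
      (contDiff_id.smul contDiff_const).contDiffAt
    exact (h1.comp t h2).contDiffWithinAt
  have hd1 : ∀ t ∈ Ioo (-1:ℝ) 1, HasDerivAt G (deriv G t) t := by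
    intro t ht
    exact ((hGsm.contDiffAt (isOpen_Ioo.mem_nhds ht)).differentiableAt (by simp)).hasDerivAt
  have hdG : ContDiffOn ℝ (⊤ : ℕ∞) (deriv G) (Ioo (-1:ℝ) 1) :=
    hGsm.deriv_of_isOpen isOpen_Ioo (by simp)
  have hd2 : ∀ t ∈ Ioo (-1:ℝ) 1, HasDerivAt (deriv G) (deriv (deriv G) t) t := by
    intro t ht
    exact ((hdG.contDiffAt (isOpen_Ioo.mem_nhds ht)).differentiableAt (by simp)).hasDerivAt
  -- profile along ee 0
  have hprof0 : ∀ r ∈ Ioo (-1:ℝ) 1,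
      deriv (deriv (fun t : ℝ => u (r • ee 0 + t • ee 0))) 0 = deriv (deriv G) r := by
    intro r _
    have hfun : (fun t : ℝ => u (r • ee 0 + t • ee 0)) = fun t => G (r + t) := by
      funext t
      rw [hGdef]
      simp only
      rw [← add_smul]
    rw [hfun]
    have h1 : deriv (fun t : ℝ => G (r + t)) = fun t => deriv G (r + t) := by
      funext t
      exact deriv_comp_const_add G r t
    rw [h1]
    have h2 := deriv_comp_const_add (deriv G) r 0
    rw [h2]
    norm_num
  -- profile along ee 1 at r•ee0, r ∈ (0,1)
  have hprof1 : ∀ r ∈ Ioo (0:ℝ) 1,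
      deriv (deriv (fun t : ℝ => u (r • ee 0 + t • ee 1))) 0 = deriv G r / r := by
    intro r hr
    have hevset : IsOpen {t : ℝ | r^2 + t^2 < 1} :=
      isOpen_lt (continuous_const.add (continuous_pow 2)) continuous_const
    have h0mem : (0:ℝ) ∈ {t : ℝ | r^2 + t^2 < 1} := by
      simp only [mem_setOf_eq]
      nlinarith [hr.1, hr.2]
    have hEq : (fun t : ℝ => u (r • ee 0 + t • ee 1))
        =ᶠ[nhds (0:ℝ)] fun t => G (Real.sqrt (r^2 + t^2)) := by
      filter_upwards [hevset.mem_nhds h0mem] with t ht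
      have hnorm : ‖r • ee 0 + t • ee 1‖ = Real.sqrt (r^2 + t^2) := norm_combo r t
      have hsle : Real.sqrt (r^2 + t^2) ≤ 1 := by
        rw [show (1:ℝ) = Real.sqrt 1 by simp]
        exact Real.sqrt_le_sqrt (le_of_lt ht)
      have hmem2 : r • ee 0 + t • ee 1 ∈ closedBall (0:E2) 1 :=
        mem_closedBall_zero_iff.mpr (by rw [hnorm]; exact hsle)
      rw [hrad _ hmem2, hnorm]
      exact (hGg' _ ⟨Real.sqrt_nonneg _, hsle⟩).symm
    have hEqd : deriv (fun t : ℝ => u (r • ee 0 + t • ee 1))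
        =ᶠ[nhds (0:ℝ)] deriv (fun t => G (Real.sqrt (r^2 + t^2))) := hEq.deriv
    rw [hEqd.deriv_eq]
    refine deriv2_sqrt_profile hr.1 ?_ ?_
    · have hrIoo : r ∈ Ioo (-1:ℝ) 1 := ⟨by linarith [hr.1], hr.2⟩
      filter_upwards [isOpen_Ioo.mem_nhds hrIoo] with s hs using hd1 s hs
    · exact (hd2 r ⟨by linarith [hr.1], hr.2⟩).differentiableAt
  -- laplacian as sum of two profiles
  have hlap : ∀ x ∈ ball (0:E2) 1, laplacian2 u x
      = deriv (deriv (fun t : ℝ => u (x + t • ee 0))) 0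
        + deriv (deriv (fun t : ℝ => u (x + t • ee 1))) 0 := by
    intro x hx
    rw [laplacian2, Fin.sum_univ_two]
    rw [show EuclideanSpace.single (0:Fin 2) (1:ℝ) = ee 0 from rfl,
        show EuclideanSpace.single (1:Fin 2) (1:ℝ) = ee 1 from rfl]
    rw [profile_second u husm hx (ee 0), profile_second u husm hx (ee 1)]
  -- the radial ODE
  have hODE : ∀ r ∈ Ioo (0:ℝ) 1, deriv (deriv G) r + deriv G r / r
      = (ε^2)⁻¹ * (Real.exp (G r) - r^2 * Real.exp (-(G r))) := by
    intro r hr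
    have hx : r • ee 0 ∈ ball (0:E2) 1 := hmemb r (by rw [abs_of_nonneg hr.1.le]; exact hr.2)
    have h1 := hpde _ hx
    rw [hlap _ hx, hprof0 r ⟨by linarith [hr.1], hr.2⟩, hprof1 r hr] at h1
    have hux : u (r • ee 0) = G r := rfl
    have hnx : ‖r • ee 0‖^2 = r^2 := by
      rw [norm_smul_ee, sq_abs]
    rw [hux, hnx] at h1
    exact h1
  -- the ODE at the origin
  have hODE0 : 2 * deriv (deriv G) 0 = (ε^2)⁻¹ * Real.exp (G 0) := by
    have hx : (0:E2) ∈ ball (0:E2) 1 := mem_ball_self one_pos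
    have h1 := hpde _ hx
    rw [hlap _ hx] at h1
    have hp0 : deriv (deriv (fun t : ℝ => u ((0:E2) + t • ee 0))) 0 = deriv (deriv G) 0 := by
      have hfun : (fun t : ℝ => u ((0:E2) + t • ee 0)) = G := by
        funext t
        rw [zero_add, hGdef]
      rw [hfun]
    have hp1 : deriv (deriv (fun t : ℝ => u ((0:E2) + t • ee 1))) 0 = deriv (deriv G) 0 := by
      have hEq : (fun t : ℝ => u ((0:E2) + t • ee 1)) =ᶠ[nhds (0:ℝ)] G := by
        have h0I : (0:ℝ) ∈ Ioo (-1:ℝ) 1 := by norm_num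
        filter_upwards [isOpen_Ioo.mem_nhds h0I] with t ht
        have habs : |t| ≤ 1 := le_of_lt (abs_lt.mpr ht)
        have hmem2 : (0:E2) + t • ee 1 ∈ closedBall (0:E2) 1 := by
          rw [zero_add, mem_closedBall_zero_iff, norm_smul_ee]
          exact habs
        rw [zero_add] at hmem2 ⊢
        rw [hrad _ hmem2, norm_smul_ee]
        exact (hGg t habs).symm
      rw [hEq.deriv.deriv_eq]
    rw [hp0, hp1] at h1
    have hu0 : u (0:E2) = G 0 := by
      rw [hGdef]
      simp only
      rw [zero_smul]
    rw [hu0] at h1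
    simp only [norm_zero] at h1
    norm_num at h1
    linarith
  -- 1D analysis
  have hneg := part_a hε hGC heven hd1 hd2 hODE hG1 hODE0
  have hlog := part_b hε hGC hd1 hd2 hODE hG1
  have hder := part_c hε hGC hd1 hd2 hODE hG1 hneg hlog
  intro r hr
  have hgr : g r = G r := (hGg' r ⟨hr.1.le, hr.2.le⟩).symm
  have hdgr : deriv g r = deriv G r := by
    have hEq : g =ᶠ[nhds r] G := by
      filter_upwards [isOpen_Ioo.mem_nhds hr] with s hs
      exact (hGg' s ⟨hs.1.le, hs.2.le⟩).symm
    exact hEq.deriv_eq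
  rw [hgr, hdgr]
  exact ⟨⟨hlog r hr, hneg r hr⟩, hder r hr⟩
end

section
/- There exists a constant C > 0 such that for every real number a with 0 < a ≤ 1, the infinite product ∏_{m=0}^{∞} (1 + a·2^m)^{1/2^m} converges and satisfies ∏_{m=0}^{∞} (1 + a·2^m)^{1/2^m} ≤ exp(C·√a). -/
/-!
Taking logarithms, the `m`-th factor contributes `log (1 + a 2^m) / 2^m`. Since
`log (1 + x) ≤ 2 √x`, this is at most `2 √a / √(2^m) = 2 √a (1/√2)^m`, so the logarithms form a
series dominated by a geometric one with sum `2 √a / (1 - 1/√2)`.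
-/

open Real

namespace Real

theorem sqrt_pow_of_nonneg {x : ℝ} (hx : 0 ≤ x) (n : ℕ) : √(x ^ n) = √x ^ n := by
  rw [← sqrt_sq (pow_nonneg (sqrt_nonneg x) n), ← pow_mul, mul_comm, pow_mul, sq_sqrt hx]

theorem log_one_add_le_two_sqrt {x : ℝ} (hx : 0 ≤ x) : log (1 + x) ≤ 2 * √x := by
  have hs := sqrt_nonneg x
  calc log (1 + x) ≤ log ((1 + √x) ^ 2) :=
        log_le_log (by positivity) (by nlinarith [sq_sqrt hx])
    _ = 2 * log (1 + √x) := by rw [log_pow]; push_cast; ring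
    _ ≤ 2 * √x := by gcongr; linarith [log_le_sub_one_of_pos (by positivity : 0 < 1 + √x)]

theorem log_one_add_mul_div_le {a x : ℝ} (ha : 0 ≤ a) (hx : 0 < x) :
    log (1 + a * x) / x ≤ 2 * √a / √x := by
  calc log (1 + a * x) / x ≤ 2 * √(a * x) / x := by
        gcongr; exact log_one_add_le_two_sqrt (by positivity)
    _ = 2 * √a / √x := by rw [sqrt_mul ha, mul_div_assoc, mul_div_assoc, sqrt_div_self']; ring

theorem log_one_add_mul_two_pow_div_le {a : ℝ} (ha : 0 ≤ a) (m : ℕ) :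
    log (1 + a * 2 ^ m) / 2 ^ m ≤ 2 * √a * (√2)⁻¹ ^ m := by
  calc log (1 + a * 2 ^ m) / 2 ^ m ≤ 2 * √a / √(2 ^ m) :=
        log_one_add_mul_div_le ha (by positivity)
    _ = 2 * √a * (√2)⁻¹ ^ m := by rw [sqrt_pow_of_nonneg zero_le_two, inv_pow, div_eq_mul_inv]

end Real

/-- there is a constant `C > 0` such that for every `0 < a ≤ 1` the infinite
product `∏_{m=0}^∞ (1 + a·2^m)^{1/2^m}` converges and is at most `exp(C·√a)`. -/
theorem stmt_15 :
    ∃ C > (0 : ℝ), ∀ a : ℝ, 0 < a → a ≤ 1 →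
      Multipliable (fun m : ℕ => ((1 + a * 2 ^ m) : ℝ) ^ ((1 : ℝ) / 2 ^ m)) ∧
      ∏' m : ℕ, ((1 + a * 2 ^ m) : ℝ) ^ ((1 : ℝ) / 2 ^ m) ≤ Real.exp (C * Real.sqrt a) := by
  set r : ℝ := (√2)⁻¹
  have hr0 : 0 ≤ r := by positivity
  have hr1 : r < 1 := inv_lt_one_of_one_lt₀ one_lt_sqrt_two
  refine ⟨2 / (1 - r), div_pos two_pos (sub_pos.2 hr1), fun a ha _ => ?_⟩
  set f : ℕ → ℝ := fun m => (1 + a * 2 ^ m) ^ ((1 : ℝ) / 2 ^ m)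
  have hf_pos (m : ℕ) : 0 < f m := by positivity
  have hlog_nonneg (m : ℕ) : 0 ≤ log (f m) :=
    log_nonneg (one_le_rpow (by simp only [le_add_iff_nonneg_right]; positivity) (by positivity))
  have hlog_le (m : ℕ) : log (f m) ≤ 2 * √a * r ^ m := by
    rw [log_rpow (by positivity), one_div_mul_eq_div]
    exact log_one_add_mul_two_pow_div_le ha.le m
  have hgeom : Summable fun m : ℕ => 2 * √a * r ^ m :=
    (summable_geometric_of_lt_one hr0 hr1).mul_left _
  have hsum : Summable fun m => log (f m) := hgeom.of_nonneg_of_le hlog_nonneg hlog_le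
  refine ⟨multipliable_of_summable_log hf_pos hsum, ?_⟩
  rw [← rexp_tsum_eq_tprod hf_pos hsum]
  gcongr
  calc ∑' m, log (f m) ≤ ∑' m : ℕ, 2 * √a * r ^ m := hsum.tsum_le_tsum hlog_le hgeom
    _ = 2 / (1 - r) * √a := by
        rw [tsum_mul_left, tsum_geometric_of_lt_one hr0 hr1]; ring
end

section
/- Let κ ≥ 0 and let τ : ℝ⁴ → ℝ be a smooth Λ_ε-periodic function with τ > 0 everywhere and −Δτ(x) ≤ κ·τ(x) for all x. Then for every real p ≥ 1, ∫_{Q_ε} |∇(τ^p)|² dx ≤ (p²/(2p−1))·κ·∫_{Q_ε} τ^{2p} dx. -/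
open Real Set Metric Filter MeasureTheory

/-- The side lengths of the lattice `Λ_ε = (√ε·ℤ)² × (ε^{−1/2}·ℤ)² ⊂ ℝ⁴`. -/
noncomputable def side (ε : ℝ) (i : Fin 4) : ℝ :=
  if (i : ℕ) < 2 then Real.sqrt ε else (Real.sqrt ε)⁻¹

/-- The lattice vector of `Λ_ε` with integer coordinates `m`. -/
noncomputable def latticeVec (ε : ℝ) (m : Fin 4 → ℤ) : EuclideanSpace ℝ (Fin 4) :=
  WithLp.toLp 2 (fun i => (m i : ℝ) * side ε i)

/-- `f : ℝ⁴ → ℝ` is `Λ_ε`-periodic. -/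
def LatticePeriodic (ε : ℝ) (f : EuclideanSpace ℝ (Fin 4) → ℝ) : Prop :=
  ∀ (m : Fin 4 → ℤ) (x : EuclideanSpace ℝ (Fin 4)), f (x + latticeVec ε m) = f x

/-- The fundamental domain `Q_ε = [0,√ε)² × [0,ε^{−1/2})²`, of Lebesgue measure 1. -/
def fundDomain (ε : ℝ) : Set (EuclideanSpace ℝ (Fin 4)) :=
  {x | ∀ i : Fin 4, x i ∈ Ico (0 : ℝ) (side ε i)}

/-- `|∇f|²`: the squared Euclidean norm of the gradient of `f`. -/
noncomputable def gradSq (f : EuclideanSpace ℝ (Fin 4) → ℝ)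
    (x : EuclideanSpace ℝ (Fin 4)) : ℝ :=
  ∑ i : Fin 4, (fderiv ℝ f x (EuclideanSpace.single i 1)) ^ 2

/-- The Euclidean Laplacian of `f : ℝ⁴ → ℝ`. -/
noncomputable def laplacian4 (f : EuclideanSpace ℝ (Fin 4) → ℝ)
    (x : EuclideanSpace ℝ (Fin 4)) : ℝ :=
  ∑ i : Fin 4,
    fderiv ℝ (fun y => fderiv ℝ f y (EuclideanSpace.single i 1)) x (EuclideanSpace.single i 1)


namespace Stmt16Aux

noncomputable abbrev ψ4 : EuclideanSpace ℝ (Fin 4) ≃L[ℝ] (Fin 4 → ℝ) :=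
  EuclideanSpace.equiv (Fin 4) ℝ

lemma transfer (ε : ℝ) (g : EuclideanSpace ℝ (Fin 4) → ℝ) :
    ∫ x in fundDomain ε, g x
      = ∫ y in Icc (0 : Fin 4 → ℝ) (side ε), g (ψ4.symm y) := by
  have h1 : (MeasurableEquiv.toLp 2 (Fin 4 → ℝ)).symm ⁻¹'
      (Set.pi univ (fun i => Ico (0:ℝ) (side ε i))) = fundDomain ε := by
    ext x; simp [fundDomain, Set.mem_pi]
  have h2 : ∫ x in fundDomain ε, g x
      = ∫ y in Set.pi univ (fun i => Ico (0:ℝ) (side ε i)), g (ψ4.symm y) := by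
    rw [← h1,
      ← (EuclideanSpace.volume_preserving_symm_measurableEquiv_toLp (Fin 4)).setIntegral_preimage_emb
        (MeasurableEquiv.toLp 2 (Fin 4 → ℝ)).symm.measurableEmbedding
        (fun y => g (ψ4.symm y)) _]
    rfl
  rw [h2, volume_pi, setIntegral_congr_set Measure.univ_pi_Ico_ae_eq_Icc]
  rfl

end Stmt16Aux

open Stmt16Aux in
/-- if `κ ≥ 0` and `τ : ℝ⁴ → ℝ` is smooth, `Λ_ε`-periodic, everywhere
positive, and satisfies `−Δτ ≤ κ·τ`, then for every real `p ≥ 1`,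
`∫ |∇(τ^p)|² ≤ (p²/(2p−1))·κ·∫ τ^{2p}`. -/
theorem stmt_16 (ε κ : ℝ) (hε : 0 < ε) (hκ : 0 ≤ κ)
    (τ : EuclideanSpace ℝ (Fin 4) → ℝ)
    (hsmooth : ContDiff ℝ (⊤ : ℕ∞) τ) (hper : LatticePeriodic ε τ)
    (hpos : ∀ x, 0 < τ x)
    (hsub : ∀ x, -laplacian4 τ x ≤ κ * τ x)
    (p : ℝ) (hp : 1 ≤ p) :
    ∫ x in fundDomain ε, gradSq (fun y => τ y ^ p) x ≤
      p ^ 2 / (2 * p - 1) * κ * ∫ x in fundDomain ε, τ x ^ (2 * p) := by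
  classical
  set q : ℝ := 2 * p - 1 with hqdef
  have hq0 : (0:ℝ) < q := by simp only [hqdef]; linarith
  have hτd : Differentiable ℝ τ := hsmooth.differentiable (by simp)
  set D : Fin 4 → EuclideanSpace ℝ (Fin 4) → ℝ :=
    fun i x => fderiv ℝ τ x (EuclideanSpace.single i 1) with hDdef
  have hDsm : ∀ i, ContDiff ℝ (⊤ : ℕ∞) (D i) := fun i =>
    (hsmooth.fderiv_right (by simp)).clm_apply contDiff_const
  have hDd : ∀ i, Differentiable ℝ (D i) := fun i => (hDsm i).differentiable (by simp)
  -- derivative of τ ^ r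
  have hrpow : ∀ (r : ℝ) (x), HasFDerivAt (fun y => τ y ^ r)
      ((r * τ x ^ (r - 1)) • fderiv ℝ τ x) x := fun r x =>
    (hτd x).hasFDerivAt.rpow_const (Or.inl (hpos x).ne')
  have hrpowc : ∀ r : ℝ, Continuous (fun x => τ x ^ r) := fun r =>
    hsmooth.continuous.rpow_const (fun x => Or.inl (hpos x).ne')
  -- pointwise identity A
  have hA : ∀ x, gradSq (fun y => τ y ^ p) x = p ^ 2 * (τ x ^ (q - 1) * gradSq τ x) := by
    intro x
    have hf : fderiv ℝ (fun y => τ y ^ p) x = (p * τ x ^ (p - 1)) • fderiv ℝ τ x :=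
      (hrpow p x).fderiv
    have h2 : τ x ^ (p - 1) * τ x ^ (p - 1) = τ x ^ (q - 1) := by
      rw [← Real.rpow_add (hpos x)]; congr 1; simp only [hqdef]; ring
    simp only [gradSq, hf, ContinuousLinearMap.smul_apply, smul_eq_mul, Finset.mul_sum]
    refine Finset.sum_congr rfl fun i _ => ?_
    have : (p * τ x ^ (p - 1) * fderiv ℝ τ x (EuclideanSpace.single i 1)) ^ 2
        = p ^ 2 * ((τ x ^ (p-1) * τ x ^ (p-1)) * fderiv ℝ τ x (EuclideanSpace.single i 1) ^ 2) := by
      ring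
    rw [this, h2]
  -- periodicity of fderiv
  have hfper : ∀ (m : Fin 4 → ℤ) (x), fderiv ℝ τ (x + latticeVec ε m) = fderiv ℝ τ x := by
    intro m x
    have h1 : HasFDerivAt (fun y => τ (y + latticeVec ε m))
        (fderiv ℝ τ (x + latticeVec ε m)) x := by
      have := ((hτd (x + latticeVec ε m)).hasFDerivAt.comp x
        ((hasFDerivAt_id x).add_const (latticeVec ε m)))
      exact this
    have h2 : (fun y => τ (y + latticeVec ε m)) = τ := funext fun y => hper m y
    rw [h2] at h1
    exact (h1.fderiv).symm ▸ rfl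
  -- the vector field G and its derivative
  set G : Fin 4 → EuclideanSpace ℝ (Fin 4) → ℝ := fun i x => τ x ^ q * D i x with hGdef
  set G' : Fin 4 → EuclideanSpace ℝ (Fin 4) →
      (EuclideanSpace ℝ (Fin 4) →L[ℝ] ℝ) := fun i x =>
    τ x ^ q • fderiv ℝ (D i) x + D i x • ((q * τ x ^ (q - 1)) • fderiv ℝ τ x) with hG'def
  have hG : ∀ i x, HasFDerivAt (G i) (G' i x) x := fun i x =>
    (hrpow q x).mul ((hDd i x).hasFDerivAt)
  have hGper : ∀ (i) (m : Fin 4 → ℤ) (x), G i (x + latticeVec ε m) = G i x := by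
    intro i m x
    simp only [hGdef, hDdef, hper m x, hfper m x]
  -- move to the pi world
  set a : Fin 4 → ℝ := 0 with hadef
  set b : Fin 4 → ℝ := side ε with hbdef
  have hside : ∀ i, 0 < side ε i := by
    intro i
    have h0 : 0 < Real.sqrt ε := Real.sqrt_pos.2 hε
    unfold side; split <;> positivity
  have hab : a ≤ b := fun i => (hside i).le
  set f : Fin 4 → (Fin 4 → ℝ) → ℝ := fun i y => G i (ψ4.symm y) with hfdef
  set f' : Fin 4 → (Fin 4 → ℝ) → ((Fin 4 → ℝ) →L[ℝ] ℝ) := fun i y =>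
    (G' i (ψ4.symm y)).comp (ψ4.symm : (Fin 4 → ℝ) →L[ℝ] EuclideanSpace ℝ (Fin 4)) with hf'def
  have hfd : ∀ i y, HasFDerivAt (f i) (f' i y) y := fun i y =>
    (hG i (ψ4.symm y)).comp y (ψ4.symm.hasFDerivAt)
  have hsingle : ∀ i : Fin 4,
      (ψ4.symm : (Fin 4 → ℝ) →L[ℝ] EuclideanSpace ℝ (Fin 4)) (Pi.single i 1)
        = EuclideanSpace.single i 1 := fun i => rfl
  -- divergence computation
  have hdivsum : ∀ y, ∑ i, f' i y (Pi.single i 1)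
      = τ (ψ4.symm y) ^ q * laplacian4 τ (ψ4.symm y)
        + q * (τ (ψ4.symm y) ^ (q - 1) * gradSq τ (ψ4.symm y)) := by
    intro y
    simp only [hf'def, ContinuousLinearMap.coe_comp', Function.comp_apply, hsingle, hG'def,
      ContinuousLinearMap.add_apply, ContinuousLinearMap.smul_apply, smul_eq_mul]
    rw [Finset.sum_add_distrib]
    congr 1
    · simp only [laplacian4, Finset.mul_sum, hDdef]
    · simp only [gradSq, Finset.mul_sum, hDdef]
      refine Finset.sum_congr rfl fun i _ => ?_
      ring
  -- boundary terms cancel by periodicity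
  have hbdry : ∀ (i : Fin 4) (y : Fin 3 → ℝ),
      f i (i.insertNth (b i) y) = f i (i.insertNth (a i) y) := by
    intro i y
    have hins : (i.insertNth (b i) y : Fin 4 → ℝ)
        = (i.insertNth (a i) y : Fin 4 → ℝ)
          + (fun j => ((Pi.single i 1 : Fin 4 → ℤ) j : ℝ) * side ε j) := by
      funext j
      refine Fin.succAboveCases i ?_ ?_ j
      · simp [hadef, hbdef]
      · intro k
        simp [Pi.single_eq_of_ne (Fin.succAbove_ne i k), hadef]
    simp only [hfdef, hins, map_add]
    exact hGper i (Pi.single i 1) (ψ4.symm (i.insertNth (a i) y))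
  -- continuity of the divergence
  have hE : ∀ i : Fin 4, ContDiff ℝ (⊤ : ℕ∞)
      (fun x => fderiv ℝ (D i) x (EuclideanSpace.single i 1)) := fun i =>
    ((hDsm i).fderiv_right (by simp)).clm_apply contDiff_const
  have hlapc : Continuous (laplacian4 τ) := by
    unfold laplacian4
    exact continuous_finset_sum _ fun i _ => (hE i).continuous
  have hgradc : Continuous (gradSq τ) := by
    unfold gradSq
    exact continuous_finset_sum _ fun i _ => ((hDsm i).continuous).pow 2
  have hWc : Continuous (fun x => τ x ^ q * laplacian4 τ x
      + q * (τ x ^ (q - 1) * gradSq τ x)) :=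
    ((hrpowc q).mul hlapc).add (continuous_const.mul ((hrpowc (q-1)).mul hgradc))
  have hdiveq : (fun y => ∑ i, f' i y (Pi.single i 1))
      = fun y => τ (ψ4.symm y) ^ q * laplacian4 τ (ψ4.symm y)
        + q * (τ (ψ4.symm y) ^ (q - 1) * gradSq τ (ψ4.symm y)) := funext hdivsum
  have hInt : IntegrableOn (fun y => ∑ i, f' i y (Pi.single i 1)) (Icc a b) := by
    rw [hdiveq]
    exact ((hWc.comp ψ4.symm.continuous).continuousOn).integrableOn_compact isCompact_Icc
  -- divergence theorem
  have hGc : ∀ i, Continuous (G i) := fun i => (hrpowc q).mul (hDsm i).continuous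
  have hzero : ∫ y in Icc a b, ∑ i, f' i y (Pi.single i 1) = 0 := by
    rw [integral_divergence_of_hasFDerivAt_off_countable' (n := 3) a b hab f f' ∅
      countable_empty
      (fun i => ((hGc i).comp ψ4.symm.continuous).continuousOn)
      (fun x _ i => hfd i x) hInt]
    exact Finset.sum_eq_zero fun i _ => by simp only [hbdry, sub_self]
  -- integrability pieces
  have IL : IntegrableOn (fun y => τ (ψ4.symm y) ^ q * laplacian4 τ (ψ4.symm y)) (Icc a b) :=
    ((((hrpowc q).mul hlapc).comp ψ4.symm.continuous).continuousOn).integrableOn_compact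
      isCompact_Icc
  have IH : IntegrableOn (fun y => τ (ψ4.symm y) ^ (q-1) * gradSq τ (ψ4.symm y)) (Icc a b) :=
    ((((hrpowc (q-1)).mul hgradc).comp ψ4.symm.continuous).continuousOn).integrableOn_compact
      isCompact_Icc
  have IT : IntegrableOn (fun y => τ (ψ4.symm y) ^ (2*p)) (Icc a b) :=
    (((hrpowc (2*p)).comp ψ4.symm.continuous).continuousOn).integrableOn_compact isCompact_Icc
  set A : ℝ := ∫ y in Icc a b, τ (ψ4.symm y) ^ (q - 1) * gradSq τ (ψ4.symm y) with hAdef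
  set I : ℝ := ∫ y in Icc a b, τ (ψ4.symm y) ^ (2 * p) with hIdef
  have hsplit : ∫ y in Icc a b, (τ (ψ4.symm y) ^ q * laplacian4 τ (ψ4.symm y)
      + q * (τ (ψ4.symm y) ^ (q - 1) * gradSq τ (ψ4.symm y)))
      = (∫ y in Icc a b, τ (ψ4.symm y) ^ q * laplacian4 τ (ψ4.symm y)) + q * A := by
    rw [integral_add IL (IH.const_mul q), integral_const_mul]
  rw [hdiveq] at hzero
  have hzero' : (∫ y in Icc a b, τ (ψ4.symm y) ^ q * laplacian4 τ (ψ4.symm y)) + q * A = 0 := by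
    rw [← hsplit]; exact hzero
  have hqA : q * A = ∫ y in Icc a b, -(τ (ψ4.symm y) ^ q * laplacian4 τ (ψ4.symm y)) := by
    rw [integral_neg]; linarith [hzero']
  have hmono : (∫ y in Icc a b, -(τ (ψ4.symm y) ^ q * laplacian4 τ (ψ4.symm y)))
      ≤ ∫ y in Icc a b, κ * τ (ψ4.symm y) ^ (2*p) := by
    refine setIntegral_mono_on IL.neg (IT.const_mul κ) measurableSet_Icc fun y _ => ?_
    have h1 : τ (ψ4.symm y) ^ q * τ (ψ4.symm y) = τ (ψ4.symm y) ^ (2*p) := by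
      nth_rewrite 2 [← Real.rpow_one (τ (ψ4.symm y))]
      rw [← Real.rpow_add (hpos _)]; congr 1; simp only [hqdef]; ring
    have h2 := mul_le_mul_of_nonneg_left (hsub (ψ4.symm y))
      (Real.rpow_nonneg (hpos (ψ4.symm y)).le q)
    calc -(τ (ψ4.symm y) ^ q * laplacian4 τ (ψ4.symm y))
        = τ (ψ4.symm y) ^ q * (-laplacian4 τ (ψ4.symm y)) := by ring
      _ ≤ τ (ψ4.symm y) ^ q * (κ * τ (ψ4.symm y)) := h2
      _ = κ * (τ (ψ4.symm y) ^ q * τ (ψ4.symm y)) := by ring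
      _ = κ * τ (ψ4.symm y) ^ (2*p) := by rw [h1]
  have hkey : q * A ≤ κ * I := by
    rw [hqA, hIdef]
    calc (∫ y in Icc a b, -(τ (ψ4.symm y) ^ q * laplacian4 τ (ψ4.symm y)))
        ≤ ∫ y in Icc a b, κ * τ (ψ4.symm y) ^ (2*p) := hmono
      _ = κ * ∫ y in Icc a b, τ (ψ4.symm y) ^ (2*p) := integral_const_mul κ _
  -- final assembly
  rw [Stmt16Aux.transfer ε (gradSq (fun y => τ y ^ p)),
    Stmt16Aux.transfer ε (fun x => τ x ^ (2*p))]
  rw [← hadef, ← hbdef]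
  simp only [hA]
  rw [integral_const_mul, ← hAdef, ← hIdef]
  have hpq : 0 ≤ p^2 / q := by positivity
  calc p^2 * A = p^2/q * (q*A) := by field_simp
    _ ≤ p^2/q * (κ*I) := mul_le_mul_of_nonneg_left hkey hpq
    _ = p^2/(2*p-1) * κ * I := by rw [hqdef]; ring
end
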